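/- Let d ≥ 2 be an integer, δ ≥ 1, and let B = (b_1, …, b_{d+1}) ∈ ℝ^{m×(d+1)} be a δ-twin-reduced basis. Then ‖b_1‖ ≤ δ^{2d/(d−1)} · ‖b*_{d+1}‖. -/

import Mathlib

noncomputable section

/-- Euclidean space `ℝ^m`. -/
abbrev Euc (m : ℕ) : Type := EuclideanSpace ℝ (Fin m)

variable {m : ℕ}

/-- `projGS B s` is the orthogonal projection `π_{s+1}` onto the subspace orthogonal to
`b_1, …, b_s` (0-based: orthogonal to `B 0, …, B (s-1)`). -/
def projGS (B : ℕ → Euc m) (s : ℕ) (x : Euc m) : Euc m :=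
  (Submodule.orthogonalProjectionOnto ((Submodule.span ℝ (B '' Set.Iio s))ᗮ) x : Euc m)

/-- The Gram–Schmidt vector `b*_{i+1}` (0-based index `i`). -/
def gsoVec (B : ℕ → Euc m) (i : ℕ) : Euc m := projGS B i (B i)

/-- The projected block `B_{[s+1, s+ℓ]}` (0-based start `s`; the length is supplied
separately to the predicates below). -/
def block (B : ℕ → Euc m) (s : ℕ) : ℕ → Euc m := fun t => projGS B s (B (s + t))

/-- Gram matrix of the first `ℓ` vectors. -/
def gram (B : ℕ → Euc m) (ℓ : ℕ) : Matrix (Fin ℓ) (Fin ℓ) ℝ :=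
  Matrix.of fun i j => (inner ℝ (B i) (B j) : ℝ)

/-- `vol(L(B)) = det(BᵀB)^{1/2}` for the first `ℓ` vectors. -/
def volB (B : ℕ → Euc m) (ℓ : ℕ) : ℝ := Real.sqrt (gram B ℓ).det

/-- The lattice generated by the first `ℓ` vectors. -/
def latticeSpan (B : ℕ → Euc m) (ℓ : ℕ) : Submodule ℤ (Euc m) :=
  Submodule.span ℤ (B '' Set.Iio ℓ)

/-- `λ₁(L)`: the minimum norm of a nonzero lattice vector. -/
def lambda1 (L : Submodule ℤ (Euc m)) : ℝ :=
  sInf {r : ℝ | ∃ x ∈ L, x ≠ 0 ∧ ‖x‖ = r}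

/-- `B` (of rank `ℓ`) is `δ`-SVP-reduced. -/
def SVPReduced (δ : ℝ) (B : ℕ → Euc m) (ℓ : ℕ) : Prop :=
  ‖B 0‖ ≤ δ * lambda1 (latticeSpan B ℓ)

/-- `B` (of rank `ℓ`) is `δ`-HSVP-reduced. -/
def HSVPReduced (δ : ℝ) (B : ℕ → Euc m) (ℓ : ℕ) : Prop :=
  ‖B 0‖ ≤ δ * volB B ℓ ^ ((1 : ℝ) / ℓ)

/-- The dual basis `B^× = B (BᵀB)⁻¹` of the first `ℓ` vectors (extended by `0`). -/
def dualFam (B : ℕ → Euc m) (ℓ : ℕ) : ℕ → Euc m := fun i =>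
  if h : i < ℓ then ∑ j : Fin ℓ, ((gram B ℓ)⁻¹ j ⟨i, h⟩) • B j else 0

/-- The reversed dual basis `B^{-s}`. -/
def revDual (B : ℕ → Euc m) (ℓ : ℕ) : ℕ → Euc m := fun i => dualFam B ℓ (ℓ - 1 - i)

/-- `B` (of rank `ℓ`) is `δ`-DHSVP-reduced: its reversed dual basis is `δ`-HSVP-reduced. -/
def DHSVPReduced (δ : ℝ) (B : ℕ → Euc m) (ℓ : ℕ) : Prop :=
  HSVPReduced δ (revDual B ℓ) ℓ

/-- `B = (b_1, …, b_{d+1})` is `δ`-twin-reduced: `B_{[1,d]}` is `δ`-HSVP-reduced and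
`B_{[2,d+1]}` is `δ`-DHSVP-reduced. -/
def TwinReduced (δ : ℝ) (B : ℕ → Euc m) (d : ℕ) : Prop :=
  HSVPReduced δ (block B 0) d ∧ DHSVPReduced δ (block B 1) d

/-- Gram–Schmidt coefficient `μ_{i,j}` (0-based). -/
def mu (B : ℕ → Euc m) (i j : ℕ) : ℝ :=
  (inner ℝ (B i) (gsoVec B j) : ℝ) / ‖gsoVec B j‖ ^ 2

/-- The first `ℓ` vectors are size-reduced. -/
def SizeReduced (B : ℕ → Euc m) (ℓ : ℕ) : Prop :=
  ∀ i j, j < i → i < ℓ → |mu B i j| ≤ 1 / 2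

/-- The first `ℓ` vectors are `ε`-LLL-reduced. -/
def LLLReduced (ε : ℝ) (B : ℕ → Euc m) (ℓ : ℕ) : Prop :=
  SizeReduced B ℓ ∧
    ∀ i, 0 < i → i < ℓ →
      ‖gsoVec B (i - 1)‖ ^ 2 ≤ (1 + ε) * ‖mu B i (i - 1) • gsoVec B (i - 1) + gsoVec B i‖ ^ 2

/-- `B` (of rank `ℓ`) is `δ`-DSVP-reduced: its reversed dual basis is `δ`-SVP-reduced
and `B` is `(1/3)`-LLL-reduced. -/
def DSVPReduced (δ : ℝ) (B : ℕ → Euc m) (ℓ : ℕ) : Prop :=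
  SVPReduced δ (revDual B ℓ) ℓ ∧ LLLReduced (1 / 3) B ℓ

/-- `γ` is an admissible Hermite bound for rank `r`: every lattice generated by `r`
linearly independent vectors of a Euclidean space satisfies `λ₁² ≤ γ · vol^{2/r}`. -/
def IsHermiteBound (γ : ℝ) (r : ℕ) : Prop :=
  ∀ (m' : ℕ) (v : ℕ → Euc m'), LinearIndependent ℝ (fun i : Fin r => v i) →
    lambda1 (latticeSpan v r) ^ 2 ≤ γ * volB v r ^ ((2 : ℝ) / r)


open Matrix

def W (B : ℕ → Euc m) (s : ℕ) : Submodule ℝ (Euc m) := Submodule.span ℝ (B '' Set.Iio s)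

lemma projGS_mem (B : ℕ → Euc m) (s : ℕ) (x : Euc m) : projGS B s x ∈ (W B s)ᗮ :=
  (Submodule.orthogonalProjectionOnto _ x).2

lemma sub_projGS_mem (B : ℕ → Euc m) (s : ℕ) (x : Euc m) : x - projGS B s x ∈ W B s := by
  have h := Submodule.sub_starProjection_mem_orthogonal (K := (W B s)ᗮ) x
  rw [Submodule.orthogonal_orthogonal] at h; exact h

lemma projGS_eq (B : ℕ → Euc m) (s : ℕ) {x v : Euc m} (hv : v ∈ (W B s)ᗮ)
    (hxv : x - v ∈ W B s) : projGS B s x = v := by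
  refine Submodule.eq_starProjection_of_mem_orthogonal hv ?_
  rwa [Submodule.orthogonal_orthogonal]

lemma projGS_zero (B : ℕ → Euc m) (x : Euc m) : projGS B 0 x = x := by
  refine projGS_eq B 0 ?_ (by simp)
  have : W B 0 = ⊥ := by simp [W, Set.Iio, Nat.not_lt_zero]
  simp [this]

lemma projGS_linear (B : ℕ → Euc m) (s : ℕ) : IsLinearMap ℝ (projGS B s) := by
  constructor <;> intros <;> simp [projGS]

lemma W_block_sup (B : ℕ → Euc m) (s t : ℕ) : W B s ⊔ W (block B s) t = W B (s + t) := by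
  apply le_antisymm
  · apply sup_le
    · apply Submodule.span_mono; apply Set.image_mono; intro x hx
      exact lt_of_lt_of_le hx (Nat.le_add_right s t)
    · rw [W, Submodule.span_le]; rintro x ⟨j, hj, rfl⟩
      have h1 : B (s + j) - block B s j ∈ W B s := sub_projGS_mem B s (B (s+j))
      have h2 : B (s + j) ∈ W B (s+t) := Submodule.subset_span ⟨s+j, by simpa using hj, rfl⟩
      have : block B s j = B (s+j) - (B (s+j) - block B s j) := by abel
      rw [this]
      have hWle : W B s ≤ W B (s+t) := Submodule.span_mono (Set.image_mono (fun x hx => lt_of_lt_of_le hx (Nat.le_add_right s t)))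
      exact Submodule.sub_mem _ h2 (hWle h1)
  · rw [W, Submodule.span_le]; rintro x ⟨j, hj, rfl⟩
    simp only [Set.mem_Iio] at hj
    by_cases h : j < s
    · exact Submodule.mem_sup_left (Submodule.subset_span ⟨j, h, rfl⟩)
    · push_neg at h
      obtain ⟨u, rfl⟩ := Nat.exists_eq_add_of_le h
      have hu : u < t := by omega
      have h1 : B (s+u) - block B s u ∈ W B s := sub_projGS_mem B s _
      have h2 : block B s u ∈ W (block B s) t := Submodule.subset_span ⟨u, hu, rfl⟩
      have : B (s+u) = (B (s+u) - block B s u) + block B s u := by abel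
      rw [this]
      exact Submodule.add_mem _ (Submodule.mem_sup_left h1) (Submodule.mem_sup_right h2)

lemma gsoVec_block (B : ℕ → Euc m) (s t : ℕ) : gsoVec (block B s) t = gsoVec B (s + t) := by
  symm
  have hUle : W (block B s) t ≤ (W B s)ᗮ := by
    rw [W, Submodule.span_le]; rintro x ⟨j, hj, rfl⟩; exact projGS_mem B s _
  refine projGS_eq B (s+t) ?_ ?_
  · -- gsoVec (block B s) t ∈ (W B (s+t))ᗮ
    rw [← W_block_sup B s t, ← Submodule.inf_orthogonal]
    constructor
    · -- in (W B s)ᗮ : gso = block B s t - (block - gso); block ∈ (W B s)ᗮ, diff ∈ W(block) ⊆ (W B s)ᗮ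
      have h1 : block B s t - gsoVec (block B s) t ∈ W (block B s) t := sub_projGS_mem _ t _
      have h2 : block B s t ∈ (W B s)ᗮ := projGS_mem B s _
      have : gsoVec (block B s) t = block B s t - (block B s t - gsoVec (block B s) t) := by abel
      rw [this]; exact Submodule.sub_mem _ h2 (hUle h1)
    · exact projGS_mem (block B s) t _
  · -- B (s+t) - gso(block) ∈ W B (s+t)
    rw [← W_block_sup B s t]
    have h1 : B (s+t) - block B s t ∈ W B s := sub_projGS_mem B s _
    have h2 : block B s t - gsoVec (block B s) t ∈ W (block B s) t := sub_projGS_mem _ t _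
    have : B (s+t) - gsoVec (block B s) t = (B (s+t) - block B s t) + (block B s t - gsoVec (block B s) t) := by abel
    rw [this]
    exact Submodule.add_mem _ (Submodule.mem_sup_left h1) (Submodule.mem_sup_right h2)


lemma mem_W (B : ℕ → Euc m) {j s : ℕ} (h : j < s) : B j ∈ W B s :=
  Submodule.subset_span ⟨j, h, rfl⟩

lemma inner_gso_left (B : ℕ → Euc m) {j i : ℕ} (h : j < i) :
    (inner ℝ (gsoVec B i) (B j) : ℝ) = 0 := by
  have := projGS_mem B i (B i)
  exact (Submodule.mem_orthogonal' _ _).1 this (B j) (mem_W B h)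

lemma inner_gso_right (B : ℕ → Euc m) {j i : ℕ} (h : j < i) :
    (inner ℝ (B j) (gsoVec B i) : ℝ) = 0 := by
  rw [real_inner_comm]; exact inner_gso_left B h

lemma inner_gso_self (B : ℕ → Euc m) (i : ℕ) :
    (inner ℝ (gsoVec B i) (B i) : ℝ) = ‖gsoVec B i‖ ^ 2 := by
  have h : B i = gsoVec B i + (B i - gsoVec B i) := by abel
  rw [h, inner_add_right, real_inner_self_eq_norm_sq]
  have h2 : (inner ℝ (gsoVec B i) (B i - gsoVec B i) : ℝ) = 0 :=
    (Submodule.mem_orthogonal' _ _).1 (projGS_mem B i (B i)) _ (sub_projGS_mem B i (B i))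
  rw [h2, add_zero]

lemma image_Iio_eq_range (B : ℕ → Euc m) (ℓ : ℕ) :
    B '' Set.Iio ℓ = Set.range (fun i : Fin ℓ => B i) := by
  ext x; constructor
  · rintro ⟨j, hj, rfl⟩; exact ⟨⟨j, hj⟩, rfl⟩
  · rintro ⟨i, rfl⟩; exact ⟨i, i.2, rfl⟩

lemma det_gram (B : ℕ → Euc m) (ℓ : ℕ) :
    (gram B ℓ).det = ∏ i : Fin ℓ, ‖gsoVec B i‖ ^ 2 := by
  induction ℓ with
  | zero => simp
  | succ n ih =>
    have hw : B n - gsoVec B n ∈ Submodule.span ℝ (Set.range fun i : Fin n => B i) := by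
      rw [← image_Iio_eq_range]; exact sub_projGS_mem B n (B n)
    obtain ⟨c, hc⟩ := (Submodule.mem_span_range_iff_exists_fun ℝ).mp hw
    set C : ℕ → Euc m := fun i => if i = n then gsoVec B n else B i with hC
    set A : Matrix (Fin (n+1)) (Fin (n+1)) ℝ := Matrix.of (fun i j =>
      if i = j then 1 else if i = Fin.last n then
        (if h : (j : ℕ) < n then c ⟨j, h⟩ else 0) else 0) with hA
    have hBC : ∀ i : Fin (n+1), B i = ∑ j : Fin (n+1), A i j • C j := by
      intro i
      by_cases hi : i = Fin.last n
      · subst hi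
        rw [Fin.sum_univ_castSucc]
        have h1 : ∀ j : Fin n, A (Fin.last n) j.castSucc • C j.castSucc = c j • B j := by
          intro j
          have hne : (Fin.last n) ≠ j.castSucc := (Fin.castSucc_lt_last j).ne'
          have hj : ((j.castSucc : Fin (n+1)) : ℕ) < n := j.2
          have hjn : ((j.castSucc : Fin (n+1)) : ℕ) ≠ n := Nat.ne_of_lt j.2
          have hmk : (⟨((j.castSucc : Fin (n+1)) : ℕ), hj⟩ : Fin n) = j := by ext; simp
          simp only [hA, hC, Matrix.of_apply, if_neg hne, if_pos rfl, dif_pos hj, if_neg hjn,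
            if_true, hmk, Fin.coe_castSucc]
          simp [j.isLt, Nat.ne_of_lt j.isLt]
        have h2 : A (Fin.last n) (Fin.last n) • C (Fin.last n) = gsoVec B n := by
          simp [hA, hC]
        rw [Finset.sum_congr rfl (fun j _ => h1 j), h2, hc]
        simp [Fin.val_last]
      · have hlt : (i : ℕ) < n := by
          rcases Fin.lt_last_iff_ne_last.mpr hi with h; exact h
        have : ∀ j : Fin (n+1), A i j • C j = if i = j then B i else 0 := by
          intro j
          by_cases hij : i = j
          · subst hij
            have : (i : ℕ) ≠ n := Nat.ne_of_lt hlt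
            simp [hA, hC, this]
          · simp [hA, hC, hij, hi]
        rw [Finset.sum_congr rfl (fun j _ => this j)]
        simp
    have hGram : gram B (n+1) = A * gram C (n+1) * Aᵀ := by
      ext i j
      have expand : (inner ℝ (B (i:ℕ)) (B (j:ℕ)) : ℝ)
          = ∑ k : Fin (n+1), ∑ l : Fin (n+1), A i k * (inner ℝ (C (k:ℕ)) (C (l:ℕ)) : ℝ) * A j l := by
        rw [hBC i, hBC j, sum_inner]
        refine Finset.sum_congr rfl fun k _ => ?_
        rw [real_inner_smul_left, inner_sum, Finset.mul_sum]
        refine Finset.sum_congr rfl fun l _ => ?_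
        rw [real_inner_smul_right]; ring
      show (inner ℝ (B (i:ℕ)) (B (j:ℕ)) : ℝ) = (A * gram C (n+1) * Aᵀ) i j
      rw [expand]
      simp only [Matrix.mul_apply, Matrix.transpose_apply, _root_.gram, Matrix.of_apply, Finset.sum_mul]
      rw [Finset.sum_comm]
    have hdetA : A.det = 1 := by
      have htri : A.BlockTriangular OrderDual.toDual := by
        intro i j hij
        have hij' : i < j := hij
        have h1 : i ≠ j := ne_of_lt hij'
        have h2 : i ≠ Fin.last n := by
          intro h; subst h
          exact absurd hij' (not_lt.mpr (Fin.le_last j))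
        simp [hA, h1, h2]
      rw [Matrix.det_of_lowerTriangular A htri]
      simp [hA]
    have hdetC : (gram C (n+1)).det = ‖gsoVec B n‖^2 * (gram B n).det := by
      rw [Matrix.det_succ_row _ (Fin.last n)]
      rw [Finset.sum_eq_single (Fin.last n)]
      · have hsub : (gram C (n+1)).submatrix (Fin.last n).succAbove (Fin.last n).succAbove
            = gram B n := by
          ext a b
          simp [_root_.gram, Fin.succAbove_last, hC, Nat.ne_of_lt a.2, Nat.ne_of_lt b.2]
        have hCl : C ((Fin.last n : Fin (n+1)) : ℕ) = gsoVec B n := by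
          simp [hC, Fin.val_last]
        have hentry : gram C (n+1) (Fin.last n) (Fin.last n) = ‖gsoVec B n‖^2 := by
          show (inner ℝ (C ((Fin.last n : Fin (n+1)) : ℕ)) (C ((Fin.last n : Fin (n+1)) : ℕ)) : ℝ) = _
          rw [hCl, real_inner_self_eq_norm_sq]
        rw [hsub, hentry]
        have hpow : ((-1:ℝ))^((Fin.last n : ℕ) + (Fin.last n : ℕ)) = 1 := by
          rw [← two_mul]; simp [pow_mul]
        rw [hpow, one_mul]
      · intro b _ hb
        have hz : gram C (n+1) (Fin.last n) b = 0 := by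
          have hb' : (b:ℕ) < n := Fin.val_lt_last hb
          have hCl : C ((Fin.last n : Fin (n+1)) : ℕ) = gsoVec B n := by
            simp [hC, Fin.val_last]
          have hCb : C ((b : Fin (n+1)) : ℕ) = B (b : ℕ) := by
            simp [hC, Nat.ne_of_lt hb']
          show (inner ℝ (C ((Fin.last n : Fin (n+1)) : ℕ)) (C ((b : Fin (n+1)) : ℕ)) : ℝ) = 0
          rw [hCl, hCb]; exact inner_gso_left B hb'
        rw [hz]; ring
      · intro h; exact absurd (Finset.mem_univ _) h
    rw [hGram, Matrix.det_mul, Matrix.det_mul, hdetA, Matrix.det_transpose, hdetA,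
      hdetC, ih, Fin.prod_univ_castSucc]
    simp [Fin.coe_castSucc, Fin.val_last]
    ring

lemma gsoVec_ne_zero {d : ℕ} {B : ℕ → Euc m}
    (hB : LinearIndependent ℝ (fun i : Fin d => B i)) {i : ℕ} (hi : i < d) :
    gsoVec B i ≠ 0 := by
  intro h0
  have hmem : B i ∈ W B i := by
    have h := sub_projGS_mem B i (B i)
    rw [gsoVec] at h0
    rwa [h0, sub_zero] at h
  have hle : W B i ≤ Submodule.span ℝ ((fun j : Fin d => B j) '' {j : Fin d | (j : ℕ) < i}) := by
    rw [W, Submodule.span_le]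
    rintro x ⟨j, hj, rfl⟩
    exact Submodule.subset_span ⟨⟨j, lt_trans hj hi⟩, hj, rfl⟩
  exact hB.notMem_span_image (by simp : (⟨i, hi⟩ : Fin d) ∉ {j : Fin d | (j : ℕ) < i})
    (hle hmem)

lemma gsoVec_norm_pos {d : ℕ} {B : ℕ → Euc m}
    (hB : LinearIndependent ℝ (fun i : Fin d => B i)) {i : ℕ} (hi : i < d) :
    0 < ‖gsoVec B i‖ := norm_pos_iff.mpr (gsoVec_ne_zero hB hi)

lemma det_gram_pos {d : ℕ} {B : ℕ → Euc m}
    (hB : LinearIndependent ℝ (fun i : Fin d => B i)) :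
    0 < (gram B d).det := by
  rw [det_gram]
  exact Finset.prod_pos fun i _ => pow_pos (gsoVec_norm_pos hB i.2) 2



lemma gram_symm (B : ℕ → Euc m) (ℓ : ℕ) : (gram B ℓ)ᵀ = gram B ℓ := by
  ext i j
  simp only [Matrix.transpose_apply, _root_.gram, Matrix.of_apply]
  exact real_inner_comm _ _

lemma mem_orthogonal_span' {s : Set (Euc m)} {z : Euc m}
    (h : ∀ x ∈ s, (inner ℝ x z : ℝ) = 0) : z ∈ (Submodule.span ℝ s)ᗮ := by
  rw [Submodule.mem_orthogonal]
  intro u hu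
  induction hu using Submodule.span_induction with
  | mem x hx => exact h x hx
  | zero => simp
  | add x y _ _ hx hy => rw [inner_add_left, hx, hy]; ring
  | smul a x _ hx => rw [real_inner_smul_left, hx]; ring

lemma inner_dualFam_basis {ℓ : ℕ} {B : ℕ → Euc m} (hdet : IsUnit (gram B ℓ).det)
    (i k : Fin ℓ) :
    (inner ℝ (dualFam B ℓ (i : ℕ)) (B (k : ℕ)) : ℝ) = if k = i then 1 else 0 := by
  rw [dualFam]
  rw [dif_pos i.2]
  rw [sum_inner]
  have : ∀ j : Fin ℓ, (inner ℝ ((((gram B ℓ)⁻¹ j ⟨(i:ℕ), i.2⟩)) • B (j:ℕ)) (B (k:ℕ)) : ℝ)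
      = gram B ℓ k j * (gram B ℓ)⁻¹ j i := by
    intro j
    rw [real_inner_smul_left, Fin.eta]
    have : (inner ℝ (B (j:ℕ)) (B (k:ℕ)) : ℝ) = gram B ℓ k j := real_inner_comm _ _
    rw [this]; ring
  rw [Finset.sum_congr rfl fun j _ => this j, ← Matrix.mul_apply,
    Matrix.mul_nonsing_inv _ hdet, Matrix.one_apply]

lemma dualFam_mem_W {ℓ : ℕ} (B : ℕ → Euc m) (i : ℕ) : dualFam B ℓ i ∈ W B ℓ := by
  rw [dualFam]
  split
  · exact Submodule.sum_mem _ fun j _ => Submodule.smul_mem _ _ (mem_W B j.2)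
  · exact Submodule.zero_mem _

lemma gsoVec_mem_W {ℓ : ℕ} (B : ℕ → Euc m) {i : ℕ} (hi : i < ℓ) : gsoVec B i ∈ W B ℓ := by
  have h1 : B i - gsoVec B i ∈ W B i := sub_projGS_mem B i (B i)
  have hle : W B i ≤ W B ℓ :=
    Submodule.span_mono (Set.image_mono fun x hx => lt_trans hx hi)
  have : gsoVec B i = B i - (B i - gsoVec B i) := by abel
  rw [this]
  exact Submodule.sub_mem _ (mem_W B hi) (hle h1)

lemma dualFam_last {ℓ : ℕ} {B : ℕ → Euc m}
    (hB : LinearIndependent ℝ (fun i : Fin ℓ => B i)) (hℓ : 0 < ℓ) :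
    dualFam B ℓ (ℓ - 1) = (‖gsoVec B (ℓ - 1)‖ ^ 2)⁻¹ • gsoVec B (ℓ - 1) := by
  have hdet : IsUnit (gram B ℓ).det := (det_gram_pos hB).ne'.isUnit
  have hg : gsoVec B (ℓ - 1) ≠ 0 := gsoVec_ne_zero hB (Nat.sub_lt hℓ one_pos)
  have hgn : (0:ℝ) < ‖gsoVec B (ℓ - 1)‖ ^ 2 := pow_pos (norm_pos_iff.mpr hg) 2
  set u := dualFam B ℓ (ℓ - 1)
  set v := (‖gsoVec B (ℓ - 1)‖ ^ 2)⁻¹ • gsoVec B (ℓ - 1)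
  have hu : u ∈ W B ℓ := dualFam_mem_W B (ℓ-1)
  have hv : v ∈ W B ℓ :=
    Submodule.smul_mem _ _ (gsoVec_mem_W B (Nat.sub_lt hℓ one_pos))
  have hinner : ∀ k : Fin ℓ, (inner ℝ (B (k:ℕ)) (u - v) : ℝ) = 0 := by
    intro k
    have h1 : (inner ℝ u (B (k:ℕ)) : ℝ) = if k = (⟨ℓ-1, Nat.sub_lt hℓ one_pos⟩ : Fin ℓ) then 1 else 0 :=
      inner_dualFam_basis hdet ⟨ℓ-1, Nat.sub_lt hℓ one_pos⟩ k
    have h2 : (inner ℝ v (B (k:ℕ)) : ℝ) = if k = (⟨ℓ-1, Nat.sub_lt hℓ one_pos⟩ : Fin ℓ) then 1 else 0 := by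
      rw [real_inner_smul_left]
      by_cases hk : (k:ℕ) = ℓ - 1
      · have : k = (⟨ℓ-1, Nat.sub_lt hℓ one_pos⟩ : Fin ℓ) := by ext; exact hk
        rw [if_pos this, hk, inner_gso_self]
        field_simp
      · have hne : k ≠ (⟨ℓ-1, Nat.sub_lt hℓ one_pos⟩ : Fin ℓ) := by
          intro h; exact hk (by rw [h])
        have hkl : (k:ℕ) < ℓ - 1 := by omega
        rw [if_neg hne, inner_gso_left B hkl, mul_zero]
    rw [inner_sub_right]
    have e1 : (inner ℝ (B (k:ℕ)) u : ℝ) = (inner ℝ u (B (k:ℕ)) : ℝ) := real_inner_comm _ _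
    have e2 : (inner ℝ (B (k:ℕ)) v : ℝ) = (inner ℝ v (B (k:ℕ)) : ℝ) := real_inner_comm _ _
    rw [e1, e2, h1, h2, sub_self]
  have horth : u - v ∈ (W B ℓ)ᗮ := by
    apply mem_orthogonal_span'
    rintro x ⟨j, hj, rfl⟩
    exact hinner ⟨j, hj⟩
  have : u - v ∈ W B ℓ ⊓ (W B ℓ)ᗮ := ⟨Submodule.sub_mem _ hu hv, horth⟩
  rw [Submodule.inf_orthogonal_eq_bot, Submodule.mem_bot] at this
  exact sub_eq_zero.mp this

lemma inv_gram_symm (B : ℕ → Euc m) (ℓ : ℕ) : ((gram B ℓ)⁻¹)ᵀ = (gram B ℓ)⁻¹ := by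
  rw [Matrix.transpose_nonsing_inv, gram_symm]

lemma inner_dual_dual {ℓ : ℕ} {B : ℕ → Euc m} (hdet : IsUnit (gram B ℓ).det) (a b : Fin ℓ) :
    (inner ℝ (dualFam B ℓ (a : ℕ)) (dualFam B ℓ (b : ℕ)) : ℝ) = (gram B ℓ)⁻¹ a b := by
  conv_lhs => rw [dualFam]
  rw [dif_pos a.2, sum_inner]
  have hterm : ∀ j : Fin ℓ,
      (inner ℝ (((gram B ℓ)⁻¹ j ⟨(a:ℕ), a.2⟩) • B (j:ℕ)) (dualFam B ℓ (b:ℕ)) : ℝ)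
      = (gram B ℓ)⁻¹ j a * (if j = b then 1 else 0) := by
    intro j
    rw [real_inner_smul_left, Fin.eta, real_inner_comm, inner_dualFam_basis hdet b j]
  rw [Finset.sum_congr rfl fun j _ => hterm j]
  rw [Finset.sum_eq_single b]
  · rw [if_pos rfl, mul_one]
    have : (gram B ℓ)⁻¹ b a = ((gram B ℓ)⁻¹)ᵀ a b := rfl
    rw [this, inv_gram_symm]
  · intro j _ hj; rw [if_neg hj, mul_zero]
  · intro h; exact absurd (Finset.mem_univ _) h

lemma gram_revDual {ℓ : ℕ} {B : ℕ → Euc m} (hdet : IsUnit (gram B ℓ).det) :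
    gram (revDual B ℓ) ℓ = ((gram B ℓ)⁻¹).submatrix Fin.rev Fin.rev := by
  ext i j
  show (inner ℝ (revDual B ℓ (i:ℕ)) (revDual B ℓ (j:ℕ)) : ℝ) = _
  have hi : ℓ - 1 - (i:ℕ) = ((Fin.rev i) : ℕ) := by
    rw [Fin.val_rev]; omega
  have hj : ℓ - 1 - (j:ℕ) = ((Fin.rev j) : ℕ) := by
    rw [Fin.val_rev]; omega
  rw [revDual, revDual] at *
  show (inner ℝ (dualFam B ℓ (ℓ - 1 - (i:ℕ))) (dualFam B ℓ (ℓ - 1 - (j:ℕ))) : ℝ) = _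
  rw [hi, hj, inner_dual_dual hdet]
  rfl

lemma det_gram_revDual {ℓ : ℕ} {B : ℕ → Euc m} (hdet : IsUnit (gram B ℓ).det) :
    (gram (revDual B ℓ) ℓ).det = ((gram B ℓ).det)⁻¹ := by
  rw [gram_revDual hdet]
  have : ((gram B ℓ)⁻¹).submatrix Fin.rev Fin.rev
      = ((gram B ℓ)⁻¹).submatrix (Fin.revPerm : Equiv.Perm (Fin ℓ)) (Fin.revPerm : Equiv.Perm (Fin ℓ)) := rfl
  rw [this, Matrix.det_submatrix_equiv_self, Matrix.det_nonsing_inv, Ring.inverse_eq_inv]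

lemma norm_revDual_zero {ℓ : ℕ} {B : ℕ → Euc m}
    (hB : LinearIndependent ℝ (fun i : Fin ℓ => B i)) (hℓ : 0 < ℓ) :
    ‖revDual B ℓ 0‖ = ‖gsoVec B (ℓ - 1)‖⁻¹ := by
  have hg : 0 < ‖gsoVec B (ℓ-1)‖ := gsoVec_norm_pos hB (Nat.sub_lt hℓ one_pos)
  show ‖dualFam B ℓ (ℓ - 1 - 0)‖ = _
  rw [Nat.sub_zero, dualFam_last hB hℓ, norm_smul, Real.norm_eq_abs,
    abs_of_pos (inv_pos.mpr (pow_pos hg 2)), sq, mul_inv, mul_assoc,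
    inv_mul_cancel₀ hg.ne', mul_one]





lemma volB_eq (B : ℕ → Euc m) (ℓ : ℕ) : volB B ℓ = ∏ i : Fin ℓ, ‖gsoVec B i‖ := by
  rw [volB, det_gram]
  rw [show (∏ i : Fin ℓ, ‖gsoVec B (i:ℕ)‖ ^ 2) = (∏ i : Fin ℓ, ‖gsoVec B (i:ℕ)‖) ^ 2 from
    Finset.prod_pow _ _ _]
  exact Real.sqrt_sq (Finset.prod_nonneg fun i _ => norm_nonneg _)

lemma projGS_sum (B : ℕ → Euc m) (s : ℕ) {ι : Type} [Fintype ι] (f : ι → Euc m) (g : ι → ℝ) :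
    projGS B s (∑ i, g i • f i) = ∑ i, g i • projGS B s (f i) := by
  let L := IsLinearMap.mk' _ (projGS_linear B s)
  have h1 : projGS B s (∑ i, g i • f i) = L (∑ i, g i • f i) := rfl
  rw [h1, map_sum]
  refine Finset.sum_congr rfl fun i _ => ?_
  rw [LinearMap.map_smul]; rfl

lemma block_linearIndependent {d : ℕ} {B : ℕ → Euc m}
    (hB : LinearIndependent ℝ (fun i : Fin (d+1) => B i)) :
    LinearIndependent ℝ (fun i : Fin d => block B 1 (i : ℕ)) := by
  rw [Fintype.linearIndependent_iff]
  intro g hg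
  have hx : projGS B 1 (∑ i : Fin d, g i • B (1 + (i:ℕ))) = 0 := by
    rw [projGS_sum]; exact hg
  have hmem : (∑ i : Fin d, g i • B (1 + (i:ℕ))) ∈ W B 1 := by
    have h := sub_projGS_mem B 1 (∑ i : Fin d, g i • B (1 + (i:ℕ)))
    rwa [hx, sub_zero] at h
  have hspan : W B 1 = Submodule.span ℝ {B 0} := by
    rw [W]
    congr 1
    ext x; simp [Set.Iio, Nat.lt_one_iff]
  rw [hspan, Submodule.mem_span_singleton] at hmem
  obtain ⟨r, hr⟩ := hmem
  set G : Fin (d+1) → ℝ := Fin.cases (-r) (fun i => g i) with hG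
  have hsum : ∑ j : Fin (d+1), G j • B (j : ℕ) = 0 := by
    rw [Fin.sum_univ_succ]
    have h0 : G 0 = -r := rfl
    have hs : ∀ i : Fin d, G i.succ = g i := fun i => rfl
    rw [h0, Finset.sum_congr rfl fun i _ => by rw [hs i]]
    have : ∀ i : Fin d, ((i.succ : Fin (d+1)) : ℕ) = 1 + (i : ℕ) := by
      intro i; simp [Fin.val_succ]; omega
    rw [Finset.sum_congr rfl fun i _ => by rw [this i]]
    rw [← hr]; simp
  have hall := Fintype.linearIndependent_iff.mp hB G hsum
  intro i
  have := hall i.succ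
  rwa [show G i.succ = g i from rfl] at this


/-- if `B = (b_1, …, b_{d+1})` is a `δ`-twin-reduced basis with `d ≥ 2`
and `δ ≥ 1`, then `‖b_1‖ ≤ δ^{2d/(d-1)} ‖b*_{d+1}‖`. -/
theorem twin_reduced_decay {m d : ℕ} (hd : 2 ≤ d) {δ : ℝ} (hδ : 1 ≤ δ)
    (B : ℕ → Euc m) (hB : LinearIndependent ℝ (fun i : Fin (d + 1) => B i))
    (hTwin : TwinReduced δ B d) :
    ‖B 0‖ ≤ δ ^ ((2 * (d : ℝ)) / ((d : ℝ) - 1)) * ‖gsoVec B d‖ := by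
  obtain ⟨h1, h2⟩ := hTwin
  have hδ0 : (0:ℝ) < δ := lt_of_lt_of_le one_pos hδ
  have hC : LinearIndependent ℝ (fun i : Fin d => block B 1 (i:ℕ)) := block_linearIndependent hB
  have hd1 : 0 < d := by omega
  have hp : ∀ i : ℕ, i < d + 1 → 0 < ‖gsoVec B i‖ := fun i hi => gsoVec_norm_pos hB hi
  have hg : 0 < ‖gsoVec B d‖ := hp d (by omega)
  have ha0 : gsoVec B 0 = B 0 := by rw [gsoVec, projGS_zero]
  have ha : 0 < ‖B 0‖ := by rw [← ha0]; exact hp 0 (by omega)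
  -- H1
  have hb0 : (block B 0) 0 = B 0 := by
    show projGS B 0 (B (0+0)) = B 0
    rw [projGS_zero]
  have hvol0 : volB (block B 0) d = ∏ i : Fin d, ‖gsoVec B (i:ℕ)‖ := by
    rw [volB_eq]
    refine Finset.prod_congr rfl fun i _ => ?_
    rw [gsoVec_block, Nat.zero_add]
  have H1 : ‖B 0‖ ≤ δ * (∏ i : Fin d, ‖gsoVec B (i:ℕ)‖) ^ ((1:ℝ)/(d:ℝ)) := by
    have h := h1; rw [HSVPReduced, hb0, hvol0] at h; exact h
  -- H2
  have hdet : IsUnit (gram (block B 1) d).det := (det_gram_pos hC).ne'.isUnit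
  have hgsoC : ∀ i : ℕ, gsoVec (block B 1) i = gsoVec B (1 + i) := fun i => gsoVec_block B 1 i
  have hQ : volB (block B 1) d = ∏ i : Fin d, ‖gsoVec B (1 + (i:ℕ))‖ := by
    rw [volB_eq]
    exact Finset.prod_congr rfl fun i _ => by rw [hgsoC]
  have hQpos : 0 < volB (block B 1) d := by
    rw [hQ]
    exact Finset.prod_pos fun i _ => hp _ (by omega)
  have hL : ‖revDual (block B 1) d 0‖ = ‖gsoVec B d‖⁻¹ := by
    have hd1' : 1 + (d-1) = d := by omega
    rw [norm_revDual_zero hC hd1, hgsoC (d-1), hd1']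
  have hvolR : volB (revDual (block B 1) d) d = (volB (block B 1) d)⁻¹ := by
    rw [volB, det_gram_revDual hdet, Real.sqrt_inv, volB]
  have H2 : ‖gsoVec B d‖⁻¹ ≤ δ * ((volB (block B 1) d)⁻¹) ^ ((1:ℝ)/(d:ℝ)) := by
    have h := h2; rw [DHSVPReduced, HSVPReduced, hL, hvolR] at h; exact h
  set Q := volB (block B 1) d with hQdef
  set g := ‖gsoVec B d‖ with hgdef
  set a := ‖B 0‖ with hadef
  set r : ℝ := (1:ℝ)/(d:ℝ) with hrdef
  have hdR : (2:ℝ) ≤ (d:ℝ) := by exact_mod_cast hd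
  have hr0 : 0 < r := by rw [hrdef]; positivity
  set t : ℝ := 1 - r with htdef
  have ht0 : 0 < t := by
    rw [htdef, hrdef, sub_pos, div_lt_one (by linarith : (0:ℝ) < (d:ℝ))]
    linarith
  have hQr : 0 < Q ^ r := Real.rpow_pos_of_pos hQpos _
  have key2 : Q ^ r ≤ δ * g := by
    have h := H2
    rw [Real.inv_rpow hQpos.le] at h
    calc Q ^ r = Q ^ r * g * g⁻¹ := by field_simp
    _ ≤ Q ^ r * g * (δ * (Q ^ r)⁻¹) := by
        apply mul_le_mul_of_nonneg_left h (by positivity)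
    _ = δ * g := by field_simp
  set P := ∏ i : Fin d, ‖gsoVec B (i:ℕ)‖ with hPdef
  have hPpos : 0 < P := Finset.prod_pos fun i _ => hp _ (by omega)
  have hPg : P * g = a * Q := by
    have e1 : (∏ i : Fin (d+1), ‖gsoVec B (i:ℕ)‖) = P * g := by
      rw [Fin.prod_univ_castSucc]
      rfl
    have e2 : (∏ i : Fin (d+1), ‖gsoVec B (i:ℕ)‖) = a * Q := by
      rw [Fin.prod_univ_succ]
      congr 1
      · simp [hadef, ha0]
      · rw [hQ]
        refine Finset.prod_congr rfl fun i _ => ?_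
        rw [Fin.val_succ, Nat.add_comm]
    rw [← e1, ← e2]
  have hPeq : P = a * Q / g := by
    rw [eq_div_iff hg.ne']; exact hPg
  have step : a ≤ δ * δ * a ^ r * g ^ t := by
    calc a ≤ δ * P ^ r := H1
    _ = δ * (a ^ r * Q ^ r / g ^ r) := by
        rw [hPeq, Real.div_rpow (by positivity) hg.le, Real.mul_rpow ha.le hQpos.le]
    _ ≤ δ * (a ^ r * (δ * g) / g ^ r) := by
        gcongr
    _ = δ * δ * a ^ r * (g / g ^ r) := by ring
    _ = δ * δ * a ^ r * g ^ t := by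
        rw [htdef, Real.rpow_sub hg, Real.rpow_one]
  have har : 0 < a ^ r := Real.rpow_pos_of_pos ha _
  have step2 : a ^ t ≤ δ * δ * g ^ t := by
    have hmul := mul_le_mul_of_nonneg_left step (by positivity : (0:ℝ) ≤ (a ^ r)⁻¹)
    have hLe : (a ^ r)⁻¹ * a = a ^ t := by
      rw [htdef, Real.rpow_sub ha, Real.rpow_one]
      ring
    have hRe : (a ^ r)⁻¹ * (δ * δ * a ^ r * g ^ t) = δ * δ * g ^ t := by
      field_simp
    rw [← hLe, ← hRe]
    exact hmul
  have hsides : ((δ ^ ((2:ℝ)/t)) * g) ^ t = δ * δ * g ^ t := by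
    rw [Real.mul_rpow (by positivity) hg.le, ← Real.rpow_mul hδ0.le,
      div_mul_cancel₀ _ ht0.ne']
    rw [show (2:ℝ) = ((2:ℕ):ℝ) by norm_num, Real.rpow_natCast]
    ring
  have step3 : a ≤ δ ^ ((2:ℝ)/t) * g := by
    have h := step2
    rw [← hsides] at h
    exact (Real.rpow_le_rpow_iff ha.le (by positivity) ht0).mp h
  have hexp : (2:ℝ)/t = 2 * (d:ℝ) / ((d:ℝ) - 1) := by
    rw [htdef, hrdef]
    have hd0 : (d:ℝ) ≠ 0 := by positivity
    field_simp
  rw [← hexp]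
  exact step3


end
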